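/- Let F be a field, α_1,...,α_n distinct, G = ∏(x - α_i), f ∈ F[x] with deg f < k, e ∈ F^n with support E of size ε, Λ = ∏_{j∈E}(x-α_j), and r_i = f(α_i)+e_i. If 2ε < n - k + 1 (i.e., fewer than half the minimum distance errors), then for any solution (λ, ψ_1) with λ monic, λ ≠ 0, deg λ ≤ ε, λ R^(1) ≡ ψ_1 (mod G) and deg ψ_1 ≤ deg λ + k - 1 (where R^(1) is the interpolant of r_i at α_i), the quotient ψ_1/λ is a polynomial and equals f. -/

import Mathlib

open Polynomial

/-- Correctness of Gao decoding within half the minimum distance: if fewer than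
`(n-k+1)/2` errors occurred, then any monic minimal solution `(λ, ψ₁)` of the
Gao key equation recovers the information polynomial as `ψ₁/λ = f`. -/
theorem gao_decoding_correct {F : Type*} [Field F] [DecidableEq F] {n k : ℕ}
    (hk : 1 ≤ k) (hkn : k ≤ n)
    (α : Fin n → F) (hα : Function.Injective α)
    (f : F[X]) (hf : f.degree < k) (e : Fin n → F)
    (hε : 2 * (Finset.univ.filter fun i => e i ≠ 0).card < n - k + 1)
    (lam ψ : F[X]) (hmonic : lam.Monic)
    (hdeg : lam.natDegree ≤ (Finset.univ.filter fun i => e i ≠ 0).card)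
    (hkey : (∏ i, (X - C (α i))) ∣
      lam * Lagrange.interpolate Finset.univ α (fun i => f.eval (α i) + e i) - ψ)
    (hψ : ψ.degree ≤ lam.degree + (k - 1 : ℕ)) :
    lam ∣ ψ ∧ ψ / lam = f := by
  set E := Finset.univ.filter fun i => e i ≠ 0 with hE
  set ε := E.card with hεdef
  set G : F[X] := ∏ i, (X - C (α i)) with hG
  set R : F[X] := Lagrange.interpolate Finset.univ α (fun i => f.eval (α i) + e i)
      with hR
  set Λ : F[X] := ∏ i ∈ E, (X - C (α i)) with hΛ
  have hΛmonic : Λ.Monic := monic_prod_of_monic _ _ fun i _ => monic_X_sub_C _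
  have hΛdeg : Λ.natDegree = ε := by
    rw [hΛ, natDegree_prod _ _ fun i _ => X_sub_C_ne_zero (α i)]
    simp [natDegree_X_sub_C]
    rfl
  -- G divides Λ * (R - f)
  have hGdvd : G ∣ Λ * (R - f) := by
    rw [hG]
    apply Fintype.prod_dvd_of_coprime
    · intro i j hij
      exact isCoprime_X_sub_C_of_isUnit_sub (by
        simpa [sub_eq_zero] using fun h => hij (hα h))
    · intro i
      rw [dvd_iff_isRoot]
      by_cases hi : e i = 0
      · have : R.eval (α i) = f.eval (α i) := by
          rw [hR, Lagrange.eval_interpolate_at_node _ (Set.injOn_of_injective hα) (Finset.mem_univ i), hi,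
            add_zero]
        simp [IsRoot, this]
      · have : Λ.eval (α i) = 0 := by
          rw [hΛ, eval_prod]
          apply Finset.prod_eq_zero (i := i)
          · simp [hE, hi]
          · simp
        simp [IsRoot, this]
  -- hence G ∣ Λ * ψ - lam * Λ * f
  have hGdvd2 : G ∣ Λ * ψ - lam * (Λ * f) := by
    have h1 : G ∣ Λ * (lam * R - ψ) := Dvd.dvd.mul_left hkey Λ
    have h2 : G ∣ lam * (Λ * (R - f)) := Dvd.dvd.mul_left hGdvd lam
    have := dvd_sub h2 h1
    convert this using 1
    ring
  have hGdeg : G.natDegree = n := by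
    rw [hG, natDegree_prod _ _ fun i _ => X_sub_C_ne_zero (α i)]
    simp [natDegree_X_sub_C]
  have hεn : 2 * ε + k ≤ n := by omega
  -- the difference has degree < n = deg G, hence is zero
  have hzero : Λ * ψ - lam * (Λ * f) = 0 := by
    by_contra hne
    have hle := Polynomial.natDegree_le_of_dvd hGdvd2 hne
    rw [hGdeg] at hle
    have hd1 : (Λ * ψ).degree < (n : ℕ) := by
      calc (Λ * ψ).degree ≤ Λ.degree + ψ.degree := degree_mul_le _ _
        _ ≤ (ε : ℕ) + ((lam.natDegree : WithBot ℕ) + (k - 1 : ℕ)) := by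
            apply add_le_add
            · rw [degree_eq_natDegree hΛmonic.ne_zero, hΛdeg]
            · refine hψ.trans (add_le_add_left (degree_le_natDegree) _)
        _ ≤ (ε : ℕ) + ((ε : WithBot ℕ) + (k - 1 : ℕ)) := by
            apply add_le_add_right
            apply add_le_add_left
            exact_mod_cast hdeg
        _ < (n : ℕ) := by
            rw [← Nat.cast_add, ← Nat.cast_add]
            exact_mod_cast (by omega : ε + (ε + (k - 1)) < n)
    have hd2 : (lam * (Λ * f)).degree < (n : ℕ) := by
      rcases eq_or_ne f 0 with rfl | hf0
      · simp only [mul_zero, degree_zero]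
        exact WithBot.bot_lt_coe _
      calc (lam * (Λ * f)).degree ≤ lam.degree + (Λ.degree + f.degree) := by
            refine (degree_mul_le _ _).trans (add_le_add_right (degree_mul_le _ _) _)
        _ ≤ (ε : ℕ) + ((ε : WithBot ℕ) + (k - 1 : ℕ)) := by
            apply add_le_add
            · rw [degree_eq_natDegree hmonic.ne_zero]; exact_mod_cast hdeg
            · apply add_le_add
              · rw [degree_eq_natDegree hΛmonic.ne_zero, hΛdeg]
              · rw [degree_eq_natDegree hf0]
                have : f.natDegree < k := natDegree_lt_iff_degree_lt hf0 |>.mpr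
                  (by exact_mod_cast hf)
                exact_mod_cast (by omega : f.natDegree ≤ k - 1)
        _ < (n : ℕ) := by
            rw [← Nat.cast_add, ← Nat.cast_add]
            exact_mod_cast (by omega : ε + (ε + (k - 1)) < n)
    have : (Λ * ψ - lam * (Λ * f)).degree < (n : ℕ) :=
      lt_of_le_of_lt (degree_sub_le _ _) (max_lt hd1 hd2)
    have : (Λ * ψ - lam * (Λ * f)).natDegree < n := by
      have := natDegree_lt_iff_degree_lt (p := Λ * ψ - lam * (Λ * f)) hne |>.mpr this
      exact this
    omega
  have hψeq : ψ = lam * f := by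
    have h' : Λ * ψ = Λ * (lam * f) := by
      rw [sub_eq_zero] at hzero
      rw [hzero]; ring
    exact mul_left_cancel₀ hΛmonic.ne_zero h'
  refine ⟨⟨f, hψeq⟩, ?_⟩
  rw [hψeq, mul_div_cancel_left₀ _ hmonic.ne_zero]
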